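/- Let A be an additive category with cokernels and weak kernels, and let L ⊆ A be an additive full subcategory closed under direct summands such that the class of objects L is precovering in A. Let B be the abelian category with enough projective objects whose full subcategory of projective objects B_proj is equivalent to L. Then the equivalence of full subcategories B ⊇ B_proj ≅ L ⊆ A can be extended, in a unique way, to a pair of adjoint functors Φ_L : B → A and Ψ_L : A → B, where Φ_L is the left adjoint and Ψ_L is the right adjoint. -/

import Mathlib

/-!
STATEMENT 3: Let `A` be an additive category with cokernels and weak kernels, and `L ⊆ A`
a precovering additive full subcategory closed under direct summands. Let `B` be the abelian
category with enough projectives whose subcategory of projectives is equivalent to `L`.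
Then the equivalence `B_proj ≌ L` extends, in a unique way, to a pair of adjoint functors
`Φ_L : B ⥤ A` (left adjoint) and `Ψ_L : A ⥤ B` (right adjoint).
-/

open CategoryTheory Limits

universe v₂ u₂ v u

namespace EnochsPaper

variable {A : Type u} [Category.{v} A]

/-- `l : X ⟶ C` is an `L`-precover of `C`. -/
def IsPrecover (L : A → Prop) {X C : A} (l : X ⟶ C) : Prop :=
  L X ∧ ∀ (X' : A), L X' → ∀ l' : X' ⟶ C, ∃ f : X' ⟶ X, f ≫ l = l'

/-- The class `L` is precovering: every object has an `L`-precover. -/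
def Precovering (L : A → Prop) : Prop :=
  ∀ C : A, ∃ (X : A) (l : X ⟶ C), IsPrecover L l

/-- `k : K ⟶ X` is a weak kernel of `f : X ⟶ Y`. -/
def IsWeakKernel [Preadditive A] {K X Y : A} (k : K ⟶ X) (f : X ⟶ Y) : Prop :=
  k ≫ f = 0 ∧ ∀ (C : A) (c : C ⟶ X), c ≫ f = 0 → ∃ h : C ⟶ K, h ≫ k = c

/-- The category `A` has weak kernels. -/
def HasWeakKernels (A : Type u) [Category.{v} A] [Preadditive A] : Prop :=
  ∀ (X Y : A) (f : X ⟶ Y), ∃ (K : A) (k : K ⟶ X), IsWeakKernel k f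

/-- A class of objects `L` in an additive category is an *additive full subcategory* if it
contains a zero object and is closed under binary biproducts. -/
def IsAdditiveSubcategory [Preadditive A] [HasZeroObject A] [HasBinaryBiproducts A]
    (L : A → Prop) : Prop :=
  (∃ Z : A, L Z ∧ IsZero Z) ∧ ∀ X Y : A, L X → L Y → L (X ⊞ Y)

/-- The class `L` is closed under direct summands. -/
def ClosedUnderSummands (L : A → Prop) : Prop :=
  ∀ (X N : A), L X → ∀ (s : N ⟶ X) (r : X ⟶ N), s ≫ r = 𝟙 N → L N

variable {B : Type u₂} [Category.{v₂} B]

/-- The pair of functors `(Φ, Ψ)` extends the equivalence `e : B_proj ≌ L` of full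
subcategories: the restriction of `Φ` to the projective objects of `B` agrees with
`e.functor` followed by the inclusion of `L` into `A`, and the restriction of `Ψ` to `L`
agrees with `e.inverse` followed by the inclusion of the projectives into `B`. -/
def ExtendsProjEquiv (L : A → Prop)
    (e : ObjectProperty.FullSubcategory (fun b : B => Projective b) ≌ ObjectProperty.FullSubcategory L)
    (Φ : B ⥤ A) (Ψ : A ⥤ B) : Prop :=
  Nonempty (ObjectProperty.ι (fun b : B => Projective b) ⋙ Φ ≅
      e.functor ⋙ ObjectProperty.ι L) ∧
  Nonempty (ObjectProperty.ι L ⋙ Ψ ≅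
      e.inverse ⋙ ObjectProperty.ι (fun b : B => Projective b))

section Infra

theorem hasBB_fullSub {C : Type*} [Category C] [Preadditive C] [HasBinaryBiproducts C]
    {P : C → Prop} (h : ∀ X Y : C, P X → P Y → P (X ⊞ Y)) :
    HasBinaryBiproducts (ObjectProperty.FullSubcategory P) where
  has_binary_biproduct X Y := hasBinaryBiproduct_of_total
    { pt := ⟨X.obj ⊞ Y.obj, h _ _ X.property Y.property⟩
      fst := ObjectProperty.homMk (biprod.fst : X.obj ⊞ Y.obj ⟶ X.obj)
      snd := ObjectProperty.homMk (biprod.snd : X.obj ⊞ Y.obj ⟶ Y.obj)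
      inl := ObjectProperty.homMk (biprod.inl : X.obj ⟶ X.obj ⊞ Y.obj)
      inr := ObjectProperty.homMk (biprod.inr : Y.obj ⟶ X.obj ⊞ Y.obj)
      inl_fst := by ext; exact biprod.inl_fst
      inl_snd := by ext; exact biprod.inl_snd
      inr_fst := by ext; exact biprod.inr_fst
      inr_snd := by ext; exact biprod.inr_snd } (by apply ObjectProperty.hom_ext; exact biprod.total (X := X.obj) (Y := Y.obj))

variable {A : Type u} [Category.{v} A] {B : Type u₂} [Category.{v₂} B]
variable [Preadditive A] [HasBinaryBiproducts A] [Abelian B]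

theorem hasBB_L (L : A → Prop) (hadd : ∀ X Y : A, L X → L Y → L (X ⊞ Y)) :
    HasBinaryBiproducts (ObjectProperty.FullSubcategory L) := hasBB_fullSub hadd

theorem hasBB_proj : HasBinaryBiproducts (ObjectProperty.FullSubcategory (fun b : B => Projective b)) :=
  hasBB_fullSub (fun X Y hX hY => by haveI := hX; haveI := hY; infer_instance)

theorem eFunctor_additive (L : A → Prop) (hadd : ∀ X Y : A, L X → L Y → L (X ⊞ Y))
    (e : ObjectProperty.FullSubcategory (fun b : B => Projective b) ≌ ObjectProperty.FullSubcategory L) :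
    e.functor.Additive := by
  haveI := hasBB_proj (B := B)
  haveI := preservesBinaryBiproducts_of_preservesBinaryCoproducts e.functor
  exact Functor.additive_of_preservesBinaryBiproducts e.functor

theorem eInverse_additive (L : A → Prop) (hadd : ∀ X Y : A, L X → L Y → L (X ⊞ Y))
    (e : ObjectProperty.FullSubcategory (fun b : B => Projective b) ≌ ObjectProperty.FullSubcategory L) :
    e.inverse.Additive := by
  haveI := hasBB_L L hadd
  haveI := preservesBinaryBiproducts_of_preservesBinaryCoproducts e.inverse
  exact Functor.additive_of_preservesBinaryBiproducts e.inverse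

end Infra

section Pres
variable {A : Type u} [Category.{v} A] [Preadditive A]

structure APres (L : A → Prop) (C : A) where
  L0 : A
  hL0 : L L0
  l0 : L0 ⟶ C
  cov : ∀ (X : A), L X → ∀ g : X ⟶ C, ∃ t : X ⟶ L0, t ≫ l0 = g
  L1 : A
  hL1 : L L1
  k : L1 ⟶ L0
  hk : k ≫ l0 = 0
  fac : ∀ (X : A), L X → ∀ g : X ⟶ L0, g ≫ l0 = 0 → ∃ t : X ⟶ L1, t ≫ k = g

noncomputable def apres (hwk : HasWeakKernels A) (L : A → Prop) (hpre : Precovering L)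
    (C : A) : APres L C :=
  let L0 := (hpre C).choose
  let l0 : L0 ⟶ C := (hpre C).choose_spec.choose
  let hl0 : IsPrecover L l0 := (hpre C).choose_spec.choose_spec
  let K := (hwk L0 C l0).choose
  let w : K ⟶ L0 := (hwk L0 C l0).choose_spec.choose
  let hw : IsWeakKernel w l0 := (hwk L0 C l0).choose_spec.choose_spec
  let L1 := (hpre K).choose
  let q : L1 ⟶ K := (hpre K).choose_spec.choose
  let hq : IsPrecover L q := (hpre K).choose_spec.choose_spec
  { L0 := L0
    hL0 := hl0.1
    l0 := l0
    cov := hl0.2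
    L1 := L1
    hL1 := hq.1
    k := q ≫ w
    hk := by rw [Category.assoc, hw.1, comp_zero]
    fac := by
      intro X hX g hg
      obtain ⟨h, hh⟩ := hw.2 X g hg
      obtain ⟨t, ht⟩ := hq.2 X hX h
      exact ⟨t, by rw [← Category.assoc, ht, hh]⟩ }

end Pres

section Main

/-- Identity coercion from subcategory homs to ambient homs. -/
abbrev unsub {CC : Type*} [Category CC] {P : CC → Prop} {X Y : ObjectProperty.FullSubcategory P}
    (f : X ⟶ Y) : X.obj ⟶ Y.obj := f.hom

/-- Identity coercion from ambient homs to subcategory homs. -/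
abbrev ensub {CC : Type*} [Category CC] {P : CC → Prop} (X Y : ObjectProperty.FullSubcategory P)
    (f : X.obj ⟶ Y.obj) : X ⟶ Y := ObjectProperty.homMk f

@[simp] theorem unsub_id {CC : Type*} [Category CC] {P : CC → Prop} (X : ObjectProperty.FullSubcategory P) :
    unsub (𝟙 X) = 𝟙 X.obj := rfl

@[simp] theorem unsub_comp {CC : Type*} [Category CC] {P : CC → Prop}
    {X Y Z : ObjectProperty.FullSubcategory P} (f : X ⟶ Y) (g : Y ⟶ Z) :
    unsub (f ≫ g) = unsub f ≫ unsub g := rfl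



section BPres

variable {B : Type u₂} [Category.{v₂} B] [Abelian B] [EnoughProjectives B]

noncomputable abbrev PP0 (X : B) : ObjectProperty.FullSubcategory (fun b : B => Projective b) :=
  ⟨Projective.over X, inferInstance⟩

noncomputable abbrev pX (X : B) : (PP0 X).obj ⟶ X := Projective.π X

noncomputable abbrev PP1 (X : B) : ObjectProperty.FullSubcategory (fun b : B => Projective b) :=
  ⟨Projective.over (kernel (Projective.π X)), inferInstance⟩

noncomputable abbrev ddX (X : B) : PP1 X ⟶ PP0 X :=
  ensub _ _ (Projective.π (kernel (Projective.π X)) ≫ kernel.ι (Projective.π X))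

theorem ddX_pX (X : B) : unsub (ddX X) ≫ pX X = 0 := by
  show (Projective.π _ ≫ kernel.ι _) ≫ Projective.π X = 0
  rw [Category.assoc, kernel.condition, comp_zero]

theorem Bfac {X : B} (Q : ObjectProperty.FullSubcategory (fun b : B => Projective b))
    (g : Q.obj ⟶ (PP0 X).obj) (hg : g ≫ pX X = 0) :
    ∃ s : Q ⟶ PP1 X, unsub s ≫ unsub (ddX X) = g := by
  haveI : Projective Q.obj := Q.property
  refine ⟨ensub _ _ (Projective.factorThru (kernel.lift (Projective.π X) g hg)
      (Projective.π (kernel (Projective.π X)))), ?_⟩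
  show Projective.factorThru (kernel.lift (Projective.π X) g hg)
      (Projective.π (kernel (Projective.π X))) ≫
      (Projective.π (kernel (Projective.π X)) ≫ kernel.ι (Projective.π X)) = g
  rw [← Category.assoc, Projective.factorThru_comp, kernel.lift_ι]

/-- descend a morphism along the chosen projective presentation -/
noncomputable def XDesc {X W : B} (v : (PP0 X).obj ⟶ W) (hv : unsub (ddX X) ≫ v = 0) :
    X ⟶ W :=
  Abelian.epiDesc (pX X) v (by
    have h := hv
    rw [show unsub (ddX X) = Projective.π (kernel (Projective.π X)) ≫
      kernel.ι (Projective.π X) from rfl, Category.assoc] at h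
    exact zero_of_epi_comp (Projective.π (kernel (Projective.π X))) h)

theorem pX_XDesc {X W : B} (v : (PP0 X).obj ⟶ W) (hv : unsub (ddX X) ≫ v = 0) :
    pX X ≫ XDesc v hv = v :=
  Abelian.comp_epiDesc _ _ _

noncomputable def sbarB (Q : ObjectProperty.FullSubcategory (fun b : B => Projective b)) :
    Q ⟶ PP0 Q.obj :=
  haveI : Projective Q.obj := Q.property
  ensub _ _ (Projective.factorThru (𝟙 Q.obj) (pX Q.obj))

theorem sbarB_spec (Q : ObjectProperty.FullSubcategory (fun b : B => Projective b)) :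
    unsub (sbarB Q) ≫ pX Q.obj = 𝟙 Q.obj :=
  haveI : Projective Q.obj := Q.property
  Projective.factorThru_comp _ _

noncomputable def pbarB (Q : ObjectProperty.FullSubcategory (fun b : B => Projective b)) :
    PP0 Q.obj ⟶ Q :=
  ensub _ _ (pX Q.obj)

/-- chosen lift of a morphism between presentations -/
noncomputable def tQ {X X' : B} (f : X ⟶ X') : PP0 X ⟶ PP0 X' :=
  ensub _ _ (Projective.factorThru (pX X ≫ f) (pX X'))

theorem tQ_spec {X X' : B} (f : X ⟶ X') : unsub (tQ f) ≫ pX X' = pX X ≫ f :=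
  Projective.factorThru_comp _ _

end BPres

variable (A : Type u) [Category.{v} A] (B : Type u₂) [Category.{v₂} B]

/-- Bundled context for the construction. -/
structure Ctx [Preadditive A] [HasBinaryBiproducts A] [Abelian B] (L : A → Prop) where
  hwk : HasWeakKernels A
  hpre : Precovering L
  hadd2 : ∀ X Y : A, L X → L Y → L (X ⊞ Y)
  e : ObjectProperty.FullSubcategory (fun b : B => Projective b) ≌ ObjectProperty.FullSubcategory L

namespace Ctx

variable {A : Type u} [Category.{v} A] {B : Type u₂} [Category.{v₂} B]
variable [Preadditive A] [HasBinaryBiproducts A] [HasCokernels A]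
variable [Abelian B] [EnoughProjectives B]
variable {L : A → Prop}
variable (c : Ctx A B L)

/-- The inclusion of `L` precomposed with the equivalence. -/
noncomputable def FF : ObjectProperty.FullSubcategory (fun b : B => Projective b) ⥤ A :=
  c.e.functor ⋙ ObjectProperty.ι L

/-- The inclusion of projectives precomposed with the inverse equivalence. -/
noncomputable def GG : ObjectProperty.FullSubcategory L ⥤ B :=
  c.e.inverse ⋙ ObjectProperty.ι (fun b : B => Projective b)

theorem FF_additive : c.FF.Additive := by
  haveI := eFunctor_additive L c.hadd2 c.e
  unfold FF; infer_instance

theorem GG_additive : c.GG.Additive := by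
  haveI := eInverse_additive L c.hadd2 c.e
  unfold GG; infer_instance

/-- chosen presentation -/
noncomputable def pr (C : A) : APres L C := apres c.hwk L c.hpre C

noncomputable abbrev ob0 (C : A) : ObjectProperty.FullSubcategory L := ⟨(c.pr C).L0, (c.pr C).hL0⟩

noncomputable abbrev ob1 (C : A) : ObjectProperty.FullSubcategory L := ⟨(c.pr C).L1, (c.pr C).hL1⟩

noncomputable def km (C : A) : c.ob1 C ⟶ c.ob0 C := ensub _ _ (c.pr C).k

/-- Object part of `Ψ`. -/
noncomputable abbrev PsiObj (C : A) : B := cokernel (c.GG.map (c.km C))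

noncomputable abbrev pic (C : A) : c.GG.obj (c.ob0 C) ⟶ c.PsiObj C :=
  cokernel.π (c.GG.map (c.km C))

theorem wd {C : A} (X : ObjectProperty.FullSubcategory L) (t₁ t₂ : X ⟶ c.ob0 C)
    (h : unsub t₁ ≫ (c.pr C).l0 = unsub t₂ ≫ (c.pr C).l0) :
    c.GG.map t₁ ≫ c.pic C = c.GG.map t₂ ≫ c.pic C := by
  haveI := c.GG_additive
  obtain ⟨s, hs⟩ := (c.pr C).fac X.obj X.property (unsub t₁ - unsub t₂)
    (by rw [Preadditive.sub_comp, h, sub_self])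
  rw [← sub_eq_zero, ← Preadditive.sub_comp, ← c.GG.map_sub]
  have h2 : t₁ - t₂ = ensub _ _ s ≫ c.km C := by ext; exact hs.symm
  rw [h2, c.GG.map_comp, Category.assoc, cokernel.condition, comp_zero]

/-- chosen factorization through the chosen precover -/
noncomputable def cov {C : A} (X : ObjectProperty.FullSubcategory L) (g : X.obj ⟶ C) : X ⟶ c.ob0 C :=
  ensub _ _ ((c.pr C).cov X.obj X.property g).choose

theorem cov_spec {C : A} (X : ObjectProperty.FullSubcategory L) (g : X.obj ⟶ C) :
    unsub (c.cov X g) ≫ (c.pr C).l0 = g :=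
  ((c.pr C).cov X.obj X.property g).choose_spec

theorem desc_ok {C C' : A} (t : c.ob0 C ⟶ c.ob0 C') (f : C ⟶ C')
    (h : unsub t ≫ (c.pr C').l0 = (c.pr C).l0 ≫ f) :
    c.GG.map (c.km C) ≫ c.GG.map t ≫ c.pic C' = 0 := by
  obtain ⟨s, hs⟩ := (c.pr C').fac _ (c.ob1 C).property (unsub (c.km C ≫ t))
    (by rw [unsub_comp, Category.assoc, h, ← Category.assoc]
        have h3 : unsub (c.km C) = (c.pr C).k := rfl
        rw [h3, (c.pr C).hk, zero_comp])
  have h2 : c.km C ≫ t = ensub _ _ s ≫ c.km C' := by ext; exact hs.symm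
  rw [← Category.assoc, ← c.GG.map_comp, h2, c.GG.map_comp, Category.assoc,
    cokernel.condition, comp_zero]

noncomputable def PsiMap {C C' : A} (f : C ⟶ C') : c.PsiObj C ⟶ c.PsiObj C' :=
  cokernel.desc _
    (c.GG.map (c.cov (c.ob0 C) ((c.pr C).l0 ≫ f)) ≫ c.pic C')
    (c.desc_ok _ f (c.cov_spec _ _))

theorem pic_PsiMap {C C' : A} (f : C ⟶ C') (t : c.ob0 C ⟶ c.ob0 C')
    (h : unsub t ≫ (c.pr C').l0 = (c.pr C).l0 ≫ f) :
    c.pic C ≫ c.PsiMap f = c.GG.map t ≫ c.pic C' := by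
  rw [PsiMap, cokernel.π_desc]
  exact c.wd _ _ _ (by rw [c.cov_spec, h])

theorem PsiMap_id (C : A) : c.PsiMap (𝟙 C) = 𝟙 (c.PsiObj C) := by
  apply coequalizer.hom_ext
  have h := c.pic_PsiMap (𝟙 C) (𝟙 (c.ob0 C)) (by simp)
  show c.pic C ≫ c.PsiMap (𝟙 C) = c.pic C ≫ 𝟙 (c.PsiObj C)
  rw [h, c.GG.map_id, Category.id_comp, Category.comp_id]

theorem PsiMap_comp {C C' C'' : A} (f : C ⟶ C') (g : C' ⟶ C'') :
    c.PsiMap (f ≫ g) = c.PsiMap f ≫ c.PsiMap g := by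
  apply coequalizer.hom_ext
  show c.pic C ≫ c.PsiMap (f ≫ g) = c.pic C ≫ c.PsiMap f ≫ c.PsiMap g
  rw [c.pic_PsiMap (f ≫ g) (c.cov (c.ob0 C) ((c.pr C).l0 ≫ f) ≫
      c.cov (c.ob0 C') ((c.pr C').l0 ≫ g))
    (by rw [unsub_comp, Category.assoc, c.cov_spec, ← Category.assoc, c.cov_spec,
        Category.assoc]),
    ← Category.assoc, c.pic_PsiMap f (c.cov (c.ob0 C) ((c.pr C).l0 ≫ f)) (c.cov_spec _ _),
    Category.assoc, c.pic_PsiMap g (c.cov (c.ob0 C') ((c.pr C').l0 ≫ g)) (c.cov_spec _ _),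
    c.GG.map_comp, Category.assoc]

/-- The right adjoint `Ψ`. -/
noncomputable def Psi : A ⥤ B where
  obj C := c.PsiObj C
  map f := c.PsiMap f
  map_id C := c.PsiMap_id C
  map_comp f g := c.PsiMap_comp f g

theorem Psi_obj (C : A) : c.Psi.obj C = c.PsiObj C := rfl

theorem Psi_map {C C' : A} (f : C ⟶ C') : c.Psi.map f = c.PsiMap f := rfl

section Alpha

/-- The `B`-level unit morphism. -/
noncomputable def etaH (Q : ObjectProperty.FullSubcategory (fun b : B => Projective b)) :
    Q.obj ⟶ c.GG.obj (c.e.functor.obj Q) :=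
  unsub (c.e.unit.app Q)

/-- local adjunction map `Hom(F Q, C) → Hom(Q, Ψ C)`. -/
noncomputable def alpha (Q : ObjectProperty.FullSubcategory (fun b : B => Projective b)) (C : A)
    (u : (c.e.functor.obj Q).obj ⟶ C) : Q.obj ⟶ c.PsiObj C :=
  c.etaH Q ≫ c.GG.map (c.cov (c.e.functor.obj Q) u) ≫ c.pic C

theorem alpha_char (Q : ObjectProperty.FullSubcategory (fun b : B => Projective b)) (C : A)
    (u : (c.e.functor.obj Q).obj ⟶ C) (t : c.e.functor.obj Q ⟶ c.ob0 C)
    (h : unsub t ≫ (c.pr C).l0 = u) :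
    c.alpha Q C u = c.etaH Q ≫ c.GG.map t ≫ c.pic C := by
  rw [alpha, c.wd _ _ t (by rw [c.cov_spec, h])]

theorem alpha_zero (Q : ObjectProperty.FullSubcategory (fun b : B => Projective b)) (C : A) :
    c.alpha Q C 0 = 0 := by
  haveI := c.GG_additive
  rw [c.alpha_char Q C 0 0 (by rw [show unsub (0 : c.e.functor.obj Q ⟶ c.ob0 C) =
    (0 : (c.e.functor.obj Q).obj ⟶ (c.pr C).L0) from rfl, zero_comp]),
    c.GG.map_zero, zero_comp, comp_zero]

/-- chosen lift along the cokernel projection -/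
noncomputable def w0 {C : A} (Q : ObjectProperty.FullSubcategory (fun b : B => Projective b))
    (v : Q.obj ⟶ c.PsiObj C) : Q.obj ⟶ c.GG.obj (c.ob0 C) :=
  haveI : Projective Q.obj := Q.property
  Projective.factorThru v (c.pic C)

theorem w0_spec {C : A} (Q : ObjectProperty.FullSubcategory (fun b : B => Projective b))
    (v : Q.obj ⟶ c.PsiObj C) : c.w0 Q v ≫ c.pic C = v :=
  haveI : Projective Q.obj := Q.property
  Projective.factorThru_comp v (c.pic C)

/-- transpose across the equivalence -/
noncomputable def tauc {Q : ObjectProperty.FullSubcategory (fun b : B => Projective b)}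
    {X : ObjectProperty.FullSubcategory L} (wbar : Q ⟶ c.e.inverse.obj X) : c.e.functor.obj Q ⟶ X :=
  c.e.functor.map wbar ≫ c.e.counit.app X

/-- local adjunction map `Hom(Q, Ψ C) → Hom(F Q, C)`. -/
noncomputable def beta (Q : ObjectProperty.FullSubcategory (fun b : B => Projective b)) (C : A)
    (v : Q.obj ⟶ c.PsiObj C) : (c.e.functor.obj Q).obj ⟶ C :=
  unsub (c.tauc (ensub Q (c.e.inverse.obj (c.ob0 C)) (c.w0 Q v))) ≫ (c.pr C).l0

theorem factor_km {C : A} {P : B} (hP : Projective P) (x : P ⟶ c.GG.obj (c.ob0 C))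
    (hx : x ≫ c.pic C = 0) :
    ∃ y : P ⟶ c.GG.obj (c.ob1 C), y ≫ c.GG.map (c.km C) = x := by
  haveI := hP
  set f := c.GG.map (c.km C) with hf
  refine ⟨Projective.factorThru (kernel.lift (cokernel.π f) x hx)
    (Abelian.factorThruImage f), ?_⟩
  calc Projective.factorThru (kernel.lift (cokernel.π f) x hx)
        (Abelian.factorThruImage f) ≫ f
      = Projective.factorThru (kernel.lift (cokernel.π f) x hx)
        (Abelian.factorThruImage f) ≫ Abelian.factorThruImage f ≫ Abelian.image.ι f := by
        rw [Abelian.image.fac]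
    _ = kernel.lift (cokernel.π f) x hx ≫ Abelian.image.ι f := by
        rw [← Category.assoc, Projective.factorThru_comp]
    _ = x := kernel.lift_ι _ _ _

theorem beta_alpha (Q : ObjectProperty.FullSubcategory (fun b : B => Projective b)) (C : A)
    (u : (c.e.functor.obj Q).obj ⟶ C) : c.beta Q C (c.alpha Q C u) = u := by
  haveI := c.GG_additive
  haveI hFa : c.e.functor.Additive := eFunctor_additive L c.hadd2 c.e
  haveI : Projective Q.obj := Q.property
  set t := c.cov (c.e.functor.obj Q) u with htdef
  obtain ⟨y, hy⟩ := c.factor_km Q.property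
    (c.w0 Q (c.alpha Q C u) - (c.etaH Q ≫ c.GG.map t))
    (by rw [Preadditive.sub_comp, c.w0_spec, alpha, Category.assoc, sub_self])
  have hsplit : ensub Q (c.e.inverse.obj (c.ob0 C)) (c.w0 Q (c.alpha Q C u)) =
      ensub Q (c.e.inverse.obj (c.ob0 C)) (c.etaH Q ≫ c.GG.map t) +
      ensub Q (c.e.inverse.obj (c.ob0 C)) (y ≫ c.GG.map (c.km C)) := by
    ext
    show c.w0 Q (c.alpha Q C u) = (c.etaH Q ≫ c.GG.map t) + (y ≫ c.GG.map (c.km C))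
    rw [hy]; abel
  have e1 : ensub Q (c.e.inverse.obj (c.ob0 C)) (c.etaH Q ≫ c.GG.map t) =
      c.e.unit.app Q ≫ c.e.inverse.map t := rfl
  have e2 : ensub Q (c.e.inverse.obj (c.ob0 C)) (y ≫ c.GG.map (c.km C)) =
      ensub Q (c.e.inverse.obj (c.ob1 C)) y ≫ c.e.inverse.map (c.km C) := rfl
  have tau1 : c.e.functor.map (c.e.unit.app Q ≫ c.e.inverse.map t) ≫
      c.e.counit.app (c.ob0 C) = t := by
    have h2 := c.e.counit.naturality t
    simp only [Functor.comp_map, Functor.id_map] at h2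
    erw [Functor.map_comp, Category.assoc, h2, ← Category.assoc, c.e.functor_unit_comp]
    exact Category.id_comp t
  have tau2 : c.e.functor.map (ensub Q (c.e.inverse.obj (c.ob1 C)) y ≫
        c.e.inverse.map (c.km C)) ≫ c.e.counit.app (c.ob0 C) =
      (c.e.functor.map (ensub Q (c.e.inverse.obj (c.ob1 C)) y) ≫
        c.e.counit.app (c.ob1 C)) ≫ c.km C := by
    have h2 := c.e.counit.naturality (c.km C)
    simp only [Functor.comp_map, Functor.id_map] at h2
    rw [Functor.map_comp, Category.assoc, h2, Category.assoc]
  have htau : c.tauc (ensub Q (c.e.inverse.obj (c.ob0 C)) (c.w0 Q (c.alpha Q C u))) =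
      t + (c.e.functor.map (ensub Q (c.e.inverse.obj (c.ob1 C)) y) ≫
        c.e.counit.app (c.ob1 C)) ≫ c.km C := by
    rw [tauc, hsplit, e1, e2, Functor.map_add, Preadditive.add_comp, tau1, tau2]
  show unsub (c.tauc (ensub Q (c.e.inverse.obj (c.ob0 C)) (c.w0 Q (c.alpha Q C u)))) ≫
    (c.pr C).l0 = u
  rw [htau]
  have hk' : unsub (c.km C) ≫ (c.pr C).l0 = 0 := (c.pr C).hk
  have h3 : unsub (t + (c.e.functor.map (ensub Q (c.e.inverse.obj (c.ob1 C)) y) ≫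
        c.e.counit.app (c.ob1 C)) ≫ c.km C) =
      unsub t + unsub (c.e.functor.map (ensub Q (c.e.inverse.obj (c.ob1 C)) y) ≫
        c.e.counit.app (c.ob1 C)) ≫ unsub (c.km C) := rfl
  rw [h3, Preadditive.add_comp, Category.assoc, hk', comp_zero, add_zero, htdef, c.cov_spec]

theorem alpha_beta (Q : ObjectProperty.FullSubcategory (fun b : B => Projective b)) (C : A)
    (v : Q.obj ⟶ c.PsiObj C) : c.alpha Q C (c.beta Q C v) = v := by
  haveI : Projective Q.obj := Q.property
  rw [c.alpha_char Q C (c.beta Q C v) (c.tauc (ensub Q (c.e.inverse.obj (c.ob0 C)) (c.w0 Q v)))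
      (show unsub (c.tauc (ensub Q (c.e.inverse.obj (c.ob0 C)) (c.w0 Q v))) ≫ (c.pr C).l0 =
        c.beta Q C v from rfl)]
  have h1 : (c.e.unit.app Q) ≫
      (c.e.inverse.map (c.tauc (ensub Q (c.e.inverse.obj (c.ob0 C)) (c.w0 Q v)))) =
      ensub Q (c.e.inverse.obj (c.ob0 C)) (c.w0 Q v) := by
    have h2 := c.e.unit.naturality (ensub Q (c.e.inverse.obj (c.ob0 C)) (c.w0 Q v))
    simp only [Functor.id_map, Functor.comp_map] at h2
    rw [tauc, Functor.map_comp, ← Category.assoc, ← h2, Category.assoc,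
      c.e.unit_inverse_comp]
    exact Category.comp_id _
  rw [← Category.assoc]
  show unsub (c.e.unit.app Q ≫
    c.e.inverse.map (c.tauc (ensub Q (c.e.inverse.obj (c.ob0 C)) (c.w0 Q v)))) ≫ c.pic C = v
  rw [h1]
  exact c.w0_spec Q v

/-- The local adjunction equivalence on projectives. -/
noncomputable def alphaE (Q : ObjectProperty.FullSubcategory (fun b : B => Projective b)) (C : A) :
    ((c.e.functor.obj Q).obj ⟶ C) ≃ (Q.obj ⟶ c.PsiObj C) where
  toFun := c.alpha Q C
  invFun := c.beta Q C
  left_inv := c.beta_alpha Q C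
  right_inv := c.alpha_beta Q C

theorem alpha_natC {Q : ObjectProperty.FullSubcategory (fun b : B => Projective b)} {C C' : A}
    (g : C ⟶ C') (u : (c.e.functor.obj Q).obj ⟶ C) :
    c.alpha Q C' (u ≫ g) = c.alpha Q C u ≫ c.PsiMap g := by
  rw [c.alpha_char Q C' (u ≫ g)
      (c.cov (c.e.functor.obj Q) u ≫ c.cov (c.ob0 C) ((c.pr C).l0 ≫ g))
      (by rw [unsub_comp, Category.assoc, c.cov_spec, ← Category.assoc, c.cov_spec]),
    alpha, Category.assoc, Category.assoc,
    c.pic_PsiMap g (c.cov (c.ob0 C) ((c.pr C).l0 ≫ g)) (c.cov_spec _ _),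
    c.GG.map_comp, Category.assoc]

theorem alpha_natP {Q Q' : ObjectProperty.FullSubcategory (fun b : B => Projective b)} (h : Q ⟶ Q')
    {C : A} (u : (c.e.functor.obj Q').obj ⟶ C) :
    c.alpha Q C (unsub (c.e.functor.map h) ≫ u) = unsub h ≫ c.alpha Q' C u := by
  rw [c.alpha_char Q C _ (c.e.functor.map h ≫ c.cov (c.e.functor.obj Q') u)
      (by rw [unsub_comp, Category.assoc, c.cov_spec]), alpha, c.GG.map_comp]
  have h1 : c.etaH Q ≫ c.GG.map (c.e.functor.map h) = unsub h ≫ c.etaH Q' := by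
    have h2 := c.e.unit.naturality h
    simp only [Functor.id_map, Functor.comp_map] at h2
    exact congrArg (fun f => unsub f) h2.symm
  rw [← Category.assoc, ← Category.assoc, h1, Category.assoc, Category.assoc]

end Alpha

section Phi

/-- Object part of `Φ`. -/
noncomputable abbrev PhiObj (X : B) : A := cokernel (c.FF.map (ddX X))

noncomputable abbrev pih (X : B) : c.FF.obj (PP0 X) ⟶ c.PhiObj X :=
  cokernel.π (c.FF.map (ddX X))

theorem wdB {X : B} (Q : ObjectProperty.FullSubcategory (fun b : B => Projective b)) (t₁ t₂ : Q ⟶ PP0 X)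
    (h : unsub t₁ ≫ pX X = unsub t₂ ≫ pX X) :
    c.FF.map t₁ ≫ c.pih X = c.FF.map t₂ ≫ c.pih X := by
  haveI := c.FF_additive
  obtain ⟨s, hs⟩ := Bfac Q (unsub t₁ - unsub t₂) (by rw [Preadditive.sub_comp, h, sub_self])
  rw [← sub_eq_zero, ← Preadditive.sub_comp, ← c.FF.map_sub]
  have h2 : t₁ - t₂ = s ≫ ddX X := by ext; exact hs.symm
  rw [h2, c.FF.map_comp, Category.assoc, cokernel.condition, comp_zero]

theorem alpha_pih_ker {X : B} {Cc : A} (u' : c.PhiObj X ⟶ Cc) :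
    unsub (ddX X) ≫ c.alpha (PP0 X) Cc (c.pih X ≫ u') = 0 := by
  rw [← c.alpha_natP (ddX X) (c.pih X ≫ u')]
  have h1 : unsub (c.e.functor.map (ddX X)) ≫ c.pih X ≫ u' = 0 := by
    erw [← Category.assoc]
    have h0 : unsub (c.e.functor.map (ddX X)) ≫ c.pih X = 0 := cokernel.condition _
    rw [h0, zero_comp]
  rw [h1, c.alpha_zero]

/-- The hom-set equivalence of the adjunction. -/
noncomputable def EE (X : B) (Cc : A) : (c.PhiObj X ⟶ Cc) ≃ (X ⟶ c.PsiObj Cc) where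
  toFun u' := XDesc (c.alpha (PP0 X) Cc (c.pih X ≫ u')) (c.alpha_pih_ker u')
  invFun x := cokernel.desc _ (c.beta (PP0 X) Cc (pX X ≫ x)) (by
    apply (c.alphaE (PP1 X) Cc).injective
    show c.alpha _ _ (unsub (c.e.functor.map (ddX X)) ≫ c.beta (PP0 X) Cc (pX X ≫ x)) =
      c.alpha _ _ 0
    rw [c.alpha_natP, c.alpha_beta, c.alpha_zero, ← Category.assoc, ddX_pX, zero_comp])
  left_inv u' := by
    apply coequalizer.hom_ext
    erw [cokernel.π_desc, pX_XDesc]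
    exact c.beta_alpha _ _ _
  right_inv x := by
    apply (cancel_epi (pX X)).1
    erw [pX_XDesc, cokernel.π_desc]
    exact c.alpha_beta _ _ _

theorem EE_natC (X : B) {Cc Cc' : A} (g : Cc ⟶ Cc') (u' : c.PhiObj X ⟶ Cc) :
    c.EE X Cc' (u' ≫ g) = c.EE X Cc u' ≫ c.Psi.map g := by
  apply (cancel_epi (pX X)).1
  have h1 : pX X ≫ c.EE X Cc' (u' ≫ g) =
      c.alpha (PP0 X) Cc' (c.pih X ≫ u' ≫ g) :=
    pX_XDesc (c.alpha (PP0 X) Cc' (c.pih X ≫ (u' ≫ g))) (c.alpha_pih_ker (u' ≫ g))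
  have h2 : pX X ≫ (c.EE X Cc u' ≫ c.Psi.map g) =
      c.alpha (PP0 X) Cc (c.pih X ≫ u') ≫ c.PsiMap g := by
    erw [← Category.assoc]
    rw [show pX X ≫ c.EE X Cc u' = c.alpha (PP0 X) Cc (c.pih X ≫ u') from
      pX_XDesc (c.alpha (PP0 X) Cc (c.pih X ≫ u')) (c.alpha_pih_ker u')]
    rfl
  erw [h1, h2, ← c.alpha_natC, ← Category.assoc]

/-- The left adjoint `Φ`. -/
noncomputable def Phi : B ⥤ A :=
  Adjunction.leftAdjointOfEquiv (G := c.Psi) (F_obj := c.PhiObj)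
    (fun X Cc => c.EE X Cc) (fun X Cc Cc' g h => c.EE_natC X g h)

/-- The adjunction. -/
noncomputable def adj : c.Phi ⊣ c.Psi :=
  Adjunction.adjunctionOfEquivLeft _ _

theorem Phi_obj (X : B) : c.Phi.obj X = c.PhiObj X := rfl

theorem Phi_map_eq {X X' : B} (f : X ⟶ X') :
    c.Phi.map f = (c.EE X (c.PhiObj X')).symm (f ≫ c.EE X' (c.PhiObj X') (𝟙 _)) := rfl

theorem pih_Phi_map {X X' : B} (f : X ⟶ X') (t : PP0 X ⟶ PP0 X')
    (h : unsub t ≫ pX X' = pX X ≫ f) :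
    c.pih X ≫ c.Phi.map f = c.FF.map t ≫ c.pih X' := by
  have cond : c.FF.map (ddX X) ≫ c.FF.map t ≫ c.pih X' = 0 := by
    obtain ⟨s, hs⟩ := Bfac (PP1 X) (unsub (ddX X ≫ t))
      (by rw [show unsub (ddX X ≫ t) = unsub (ddX X) ≫ unsub t from rfl, Category.assoc, h,
        ← Category.assoc, ddX_pX, zero_comp])
    rw [← Category.assoc, ← c.FF.map_comp,
      show ddX X ≫ t = s ≫ ddX X' from ObjectProperty.hom_ext _ hs.symm,
      c.FF.map_comp, Category.assoc, cokernel.condition, comp_zero]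
  have hM : c.Phi.map f = cokernel.desc _ (c.FF.map t ≫ c.pih X') cond := by
    apply (c.EE X (c.PhiObj X')).injective
    have h1 : c.EE X (c.PhiObj X') (c.Phi.map f) =
        f ≫ c.EE X' (c.PhiObj X') (𝟙 (c.PhiObj X')) :=
      Equiv.apply_symm_apply (c.EE X (c.PhiObj X')) (f ≫ c.EE X' (c.PhiObj X') (𝟙 _))
    rw [h1]
    apply (cancel_epi (pX X)).1
    have h2 : pX X ≫ c.EE X (c.PhiObj X') (cokernel.desc _ (c.FF.map t ≫ c.pih X') cond) =
        c.alpha (PP0 X) _ (c.pih X ≫ cokernel.desc _ (c.FF.map t ≫ c.pih X') cond) :=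
      pX_XDesc (c.alpha (PP0 X) (c.PhiObj X')
        (c.pih X ≫ cokernel.desc _ (c.FF.map t ≫ c.pih X') cond)) (c.alpha_pih_ker _)
    erw [h2, cokernel.π_desc]
    rw [← Category.assoc, ← h, Category.assoc]
    have h3 : pX X' ≫ c.EE X' (c.PhiObj X') (𝟙 (c.PhiObj X')) =
        c.alpha (PP0 X') _ (c.pih X' ≫ 𝟙 (c.PhiObj X')) :=
      pX_XDesc (c.alpha (PP0 X') (c.PhiObj X') (c.pih X' ≫ 𝟙 _)) (c.alpha_pih_ker _)
    erw [h3, Category.comp_id]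
    exact (c.alpha_natP t (c.pih X')).symm
  erw [hM, cokernel.π_desc]

end Phi

section Extension

/-- A morphism of the chosen precover, bundled. -/
noncomputable def l0bar (Cl : ObjectProperty.FullSubcategory L) : c.ob0 Cl.obj ⟶ Cl :=
  ensub _ _ (c.pr Cl.obj).l0

noncomputable def sbarL (Cl : ObjectProperty.FullSubcategory L) : Cl ⟶ c.ob0 Cl.obj :=
  c.cov Cl (𝟙 Cl.obj)

theorem psiext_cond (Cl : ObjectProperty.FullSubcategory L) :
    c.GG.map (c.km Cl.obj) ≫ c.GG.map (c.l0bar Cl) = 0 := by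
  haveI := c.GG_additive
  rw [← c.GG.map_comp, show c.km Cl.obj ≫ c.l0bar Cl = 0 from ObjectProperty.hom_ext _ (c.pr Cl.obj).hk,
    c.GG.map_zero]

/-- components of the `Ψ`-extension isomorphism -/
noncomputable def psiExtIso (Cl : ObjectProperty.FullSubcategory L) :
    c.PsiObj Cl.obj ≅ c.GG.obj Cl where
  hom := cokernel.desc _ (c.GG.map (c.l0bar Cl)) (c.psiext_cond Cl)
  inv := c.GG.map (c.sbarL Cl) ≫ c.pic Cl.obj
  hom_inv_id := by
    apply coequalizer.hom_ext
    rw [← Category.assoc, ← Category.assoc, cokernel.π_desc, ← c.GG.map_comp,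
      show c.GG.map (c.l0bar Cl ≫ c.sbarL Cl) ≫ c.pic Cl.obj =
        c.GG.map (𝟙 (c.ob0 Cl.obj)) ≫ c.pic Cl.obj from c.wd _ _ _ (by
          rw [unsub_comp, Category.assoc]
          rw [show unsub (c.sbarL Cl) ≫ (c.pr Cl.obj).l0 = 𝟙 Cl.obj from
            c.cov_spec Cl (𝟙 Cl.obj)]
          simp
          rfl), c.GG.map_id, Category.id_comp]
    exact (Category.comp_id _).symm
  inv_hom_id := by
    rw [Category.assoc, cokernel.π_desc, ← c.GG.map_comp,
      show c.sbarL Cl ≫ c.l0bar Cl = 𝟙 Cl from ObjectProperty.hom_ext _ (c.cov_spec Cl (𝟙 Cl.obj)), c.GG.map_id]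

/-- The extension property on the `Ψ` side. -/
noncomputable def psiExt : ObjectProperty.ι L ⋙ c.Psi ≅
    c.e.inverse ⋙ ObjectProperty.ι (fun b : B => Projective b) :=
  NatIso.ofComponents (fun Cl => c.psiExtIso Cl) (by
    intro Cl Cl' f
    show c.PsiMap (unsub f) ≫ (c.psiExtIso Cl').hom = (c.psiExtIso Cl).hom ≫ c.GG.map f
    apply coequalizer.hom_ext
    have n1 : c.pic Cl.obj ≫ c.PsiMap (unsub f) =
        c.GG.map (c.cov (c.ob0 Cl.obj) ((c.pr Cl.obj).l0 ≫ unsub f)) ≫ c.pic Cl'.obj :=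
      c.pic_PsiMap (unsub f) _ (c.cov_spec _ _)
    rw [← Category.assoc, ← Category.assoc, n1, Category.assoc]
    show _ ≫ cokernel.π _ ≫ cokernel.desc _ _ _ = (cokernel.π _ ≫ cokernel.desc _ _ _) ≫ _
    rw [cokernel.π_desc, cokernel.π_desc, ← c.GG.map_comp, ← c.GG.map_comp]
    congr 1
    ext
    show unsub (c.cov (c.ob0 Cl.obj) ((c.pr Cl.obj).l0 ≫ unsub f)) ≫ (c.pr Cl'.obj).l0 =
      (c.pr Cl.obj).l0 ≫ unsub f
    exact c.cov_spec _ _)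

theorem phiext_cond (Q : ObjectProperty.FullSubcategory (fun b : B => Projective b)) :
    c.FF.map (ddX Q.obj) ≫ c.FF.map (pbarB Q) = 0 := by
  haveI := c.FF_additive
  rw [← c.FF.map_comp, show ddX Q.obj ≫ pbarB Q = 0 from ObjectProperty.hom_ext _ (ddX_pX Q.obj), c.FF.map_zero]

/-- components of the `Φ`-extension isomorphism -/
noncomputable def phiExtIso (Q : ObjectProperty.FullSubcategory (fun b : B => Projective b)) :
    c.PhiObj Q.obj ≅ c.FF.obj Q where
  hom := cokernel.desc _ (c.FF.map (pbarB Q)) (c.phiext_cond Q)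
  inv := c.FF.map (sbarB Q) ≫ c.pih Q.obj
  hom_inv_id := by
    apply coequalizer.hom_ext
    rw [← Category.assoc, ← Category.assoc, cokernel.π_desc, ← c.FF.map_comp,
      show c.FF.map (pbarB Q ≫ sbarB Q) ≫ c.pih Q.obj =
        c.FF.map (𝟙 (PP0 Q.obj)) ≫ c.pih Q.obj from c.wdB _ _ _ (by
          rw [unsub_comp, Category.assoc]
          rw [show unsub (sbarB Q) ≫ pX Q.obj = 𝟙 Q.obj from sbarB_spec Q]
          simp
          rfl), c.FF.map_id, Category.id_comp]
    exact (Category.comp_id _).symm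
  inv_hom_id := by
    rw [Category.assoc, cokernel.π_desc, ← c.FF.map_comp,
      show sbarB Q ≫ pbarB Q = 𝟙 Q from ObjectProperty.hom_ext _ (sbarB_spec Q), c.FF.map_id]

/-- The extension property on the `Φ` side. -/
noncomputable def phiExt : ObjectProperty.ι (fun b : B => Projective b) ⋙ c.Phi ≅
    c.e.functor ⋙ ObjectProperty.ι L :=
  NatIso.ofComponents (fun Q => c.phiExtIso Q) (by
    intro Q Q' h
    show c.Phi.map (unsub h) ≫ (c.phiExtIso Q').hom = (c.phiExtIso Q).hom ≫ c.FF.map h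
    apply coequalizer.hom_ext
    have n1 : c.pih Q.obj ≫ c.Phi.map (unsub h) = c.FF.map (tQ (unsub h)) ≫ c.pih Q'.obj :=
      c.pih_Phi_map (unsub h) _ (tQ_spec _)
    erw [← Category.assoc]
    rw [← Category.assoc, n1]
    erw [Category.assoc (c.FF.map (tQ (unsub h)))]
    show _ ≫ cokernel.π (c.FF.map (ddX Q'.obj)) ≫ cokernel.desc _ _ _ =
      (cokernel.π (c.FF.map (ddX Q.obj)) ≫ cokernel.desc _ _ _) ≫ _
    rw [cokernel.π_desc, cokernel.π_desc, ← c.FF.map_comp, ← c.FF.map_comp]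
    congr 1
    ext
    show unsub (tQ (unsub h)) ≫ pX Q'.obj = pX Q.obj ≫ unsub h
    exact tQ_spec _)

end Extension

section Uniqueness

variable {PhiA : B ⥤ A} {PsiA : A ⥤ B}

theorem phiCmp_cond (j : ObjectProperty.ι (fun b : B => Projective b) ⋙ PhiA ≅
      c.e.functor ⋙ ObjectProperty.ι L) (X : B) :
    PhiA.map (unsub (ddX X)) ≫ (j.hom.app (PP0 X) ≫ c.pih X) = 0 := by
  have hn := j.hom.naturality (ddX X)
  erw [← Category.assoc,
    show PhiA.map (unsub (ddX X)) ≫ j.hom.app (PP0 X) =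
      j.hom.app (PP1 X) ≫ c.FF.map (ddX X) from hn,
    Category.assoc, cokernel.condition, comp_zero]

theorem phiCmp_hv (adj1 : PhiA ⊣ PsiA)
    (j : ObjectProperty.ι (fun b : B => Projective b) ⋙ PhiA ≅
      c.e.functor ⋙ ObjectProperty.ι L) (X : B) :
    unsub (ddX X) ≫ adj1.homEquiv (PP0 X).obj (c.PhiObj X)
      (j.hom.app (PP0 X) ≫ c.pih X) = 0 := by
  haveI := adj1.isRightAdjoint
  rw [← Adjunction.homEquiv_naturality_left, c.phiCmp_cond j X]
  rw [Adjunction.homEquiv_unit, Functor.map_zero, comp_zero]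

/-- comparison morphism from any adjoint extension to ours -/
noncomputable def phiCmpHom (adj1 : PhiA ⊣ PsiA)
    (j : ObjectProperty.ι (fun b : B => Projective b) ⋙ PhiA ≅
      c.e.functor ⋙ ObjectProperty.ι L) (X : B) : PhiA.obj X ⟶ c.PhiObj X :=
  (adj1.homEquiv X (c.PhiObj X)).symm
    (XDesc (adj1.homEquiv (PP0 X).obj (c.PhiObj X) (j.hom.app (PP0 X) ≫ c.pih X))
      (c.phiCmp_hv adj1 j X))

theorem pmap_phiCmpHom (adj1 : PhiA ⊣ PsiA)
    (j : ObjectProperty.ι (fun b : B => Projective b) ⋙ PhiA ≅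
      c.e.functor ⋙ ObjectProperty.ι L) (X : B) :
    PhiA.map (pX X) ≫ c.phiCmpHom adj1 j X = j.hom.app (PP0 X) ≫ c.pih X := by
  rw [phiCmpHom, ← Adjunction.homEquiv_naturality_left_symm, pX_XDesc,
    Equiv.symm_apply_apply]

theorem phiCmpInv_cond (adj1 : PhiA ⊣ PsiA)
    (j : ObjectProperty.ι (fun b : B => Projective b) ⋙ PhiA ≅
      c.e.functor ⋙ ObjectProperty.ι L) (X : B) :
    c.FF.map (ddX X) ≫ (j.inv.app (PP0 X) ≫ PhiA.map (pX X)) = 0 := by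
  haveI := adj1.isLeftAdjoint
  have hn := j.inv.naturality (ddX X)
  erw [← Category.assoc,
    show c.FF.map (ddX X) ≫ j.inv.app (PP0 X) =
      j.inv.app (PP1 X) ≫ PhiA.map (unsub (ddX X)) from hn,
    Category.assoc, ← PhiA.map_comp, show unsub (ddX X) ≫ pX X = 0 from ddX_pX X,
    Functor.map_zero, comp_zero]

noncomputable def phiCmpInv (adj1 : PhiA ⊣ PsiA)
    (j : ObjectProperty.ι (fun b : B => Projective b) ⋙ PhiA ≅
      c.e.functor ⋙ ObjectProperty.ι L) (X : B) : c.PhiObj X ⟶ PhiA.obj X :=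
  cokernel.desc _ (j.inv.app (PP0 X) ≫ PhiA.map (pX X)) (c.phiCmpInv_cond adj1 j X)

theorem pih_phiCmpInv (adj1 : PhiA ⊣ PsiA)
    (j : ObjectProperty.ι (fun b : B => Projective b) ⋙ PhiA ≅
      c.e.functor ⋙ ObjectProperty.ι L) (X : B) :
    c.pih X ≫ c.phiCmpInv adj1 j X = j.inv.app (PP0 X) ≫ PhiA.map (pX X) := by
  rw [phiCmpInv, cokernel.π_desc]
  rfl

/-- The comparison isomorphism `Φ' ≅ Φ`. -/
noncomputable def phiCmp (adj1 : PhiA ⊣ PsiA)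
    (j : ObjectProperty.ι (fun b : B => Projective b) ⋙ PhiA ≅
      c.e.functor ⋙ ObjectProperty.ι L) : PhiA ≅ c.Phi := by
  haveI := adj1.isLeftAdjoint
  refine NatIso.ofComponents (fun X => ?_) ?_
  · refine ⟨c.phiCmpHom adj1 j X, c.phiCmpInv adj1 j X, ?_, ?_⟩
    · haveI : Epi (PhiA.map (pX X)) := inferInstance
      apply (cancel_epi (PhiA.map (pX X))).1
      erw [← Category.assoc, c.pmap_phiCmpHom adj1 j X, Category.assoc,
        c.pih_phiCmpInv adj1 j X, ← Category.assoc, Iso.hom_inv_id_app]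
      exact (Category.id_comp _).trans (Category.comp_id _).symm
    · apply coequalizer.hom_ext
      erw [← Category.assoc, c.pih_phiCmpInv adj1 j X, Category.assoc,
        c.pmap_phiCmpHom adj1 j X, ← Category.assoc, Iso.inv_hom_id_app]
      exact (Category.id_comp _).trans (Category.comp_id _).symm
  · intro X X' f
    show PhiA.map f ≫ c.phiCmpHom adj1 j X' = c.phiCmpHom adj1 j X ≫ c.Phi.map f
    haveI : Epi (PhiA.map (pX X)) := inferInstance
    apply (cancel_epi (PhiA.map (pX X))).1
    rw [← Category.assoc]
    erw [← Category.assoc (PhiA.map (pX X))]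
    rw [← PhiA.map_comp,
      show pX X ≫ f = unsub (tQ f) ≫ pX X' from (tQ_spec f).symm, PhiA.map_comp,
      Category.assoc, c.pmap_phiCmpHom adj1 j X']
    erw [← Category.assoc (PhiA.map (unsub (tQ f)))]
    rw [show PhiA.map (unsub (tQ f)) ≫ j.hom.app (PP0 X') =
        j.hom.app (PP0 X) ≫ c.FF.map (tQ f) from j.hom.naturality (tQ f),
      c.pmap_phiCmpHom adj1 j X]
    erw [Category.assoc (j.hom.app (PP0 X)) (c.FF.map (tQ f)),
      Category.assoc (j.hom.app (PP0 X)) (c.pih X)]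
    erw [c.pih_Phi_map f (tQ f) (tQ_spec f)]
    rfl

/-- The comparison isomorphism `Ψ' ≅ Ψ`. -/
noncomputable def psiCmp (adj1 : PhiA ⊣ PsiA)
    (j : ObjectProperty.ι (fun b : B => Projective b) ⋙ PhiA ≅
      c.e.functor ⋙ ObjectProperty.ι L) : PsiA ≅ c.Psi :=
  Adjunction.rightAdjointUniq (adj1.ofNatIsoLeft (c.phiCmp adj1 j)) c.adj

end Uniqueness

end Ctx

end Main

/-- Under the stated hypotheses, the equivalence `B_proj ≌ L` extends,
uniquely up to natural isomorphism, to an adjoint pair `Φ : B ⥤ A ⊣ Ψ : A ⥤ B`. -/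
theorem exists_unique_adjoint_pair_extending_proj_equiv
    [Preadditive A] [HasZeroObject A] [HasBinaryBiproducts A] [HasCokernels A]
    (hwk : HasWeakKernels A) (L : A → Prop) (hadd : IsAdditiveSubcategory L)
    (hsum : ClosedUnderSummands L) (hpre : Precovering L)
    [Abelian B] [EnoughProjectives B]
    (e : ObjectProperty.FullSubcategory (fun b : B => Projective b) ≌ ObjectProperty.FullSubcategory L) :
    ∃ (Φ : B ⥤ A) (Ψ : A ⥤ B), Nonempty (Φ ⊣ Ψ) ∧ ExtendsProjEquiv L e Φ Ψ ∧
      ∀ (Φ' : B ⥤ A) (Ψ' : A ⥤ B), Nonempty (Φ' ⊣ Ψ') → ExtendsProjEquiv L e Φ' Ψ' →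
        Nonempty (Φ' ≅ Φ) ∧ Nonempty (Ψ' ≅ Ψ) := by
  classical
  let c : Ctx A B L := ⟨hwk, hpre, hadd.2, e⟩
  refine ⟨c.Phi, c.Psi, ⟨c.adj⟩, ⟨⟨c.phiExt⟩, ⟨c.psiExt⟩⟩, ?_⟩
  intro Phi' Psi' hadj hext
  obtain ⟨adj1⟩ := hadj
  obtain ⟨⟨jj⟩, -⟩ := hext
  exact ⟨⟨c.phiCmp adj1 jj⟩, ⟨c.psiCmp adj1 jj⟩⟩

end EnochsPaper
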